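/- Assume the static Schrödinger bridge problem min_{π ∈ Π(μ₀,μ₁)} H(π | ρ), with ρ = ℙ₀∘(X₀,X₁)^{-1}, has a unique solution π* lying in Π₂(μ₀,μ₁). Then the measure P̂ defined by dP̂/dℙ₀ = (dπ*/dρ)(X₀,X₁) is the unique minimizer of H(·|ℙ₀) over P₂(μ₀,μ₁). -/

import Mathlib

open MeasureTheory
open scoped ENNReal

/-- Relative entropy `H(μ|ν) := ∫ ln(dμ/dν) dμ` if `μ ≪ ν` (with the integral
well defined), and `+∞` otherwise. -/
noncomputable def relEnt {Ω : Type*} [MeasurableSpace Ω] (μ ν : Measure Ω) : ℝ≥0∞ :=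
  open Classical in
  if μ ≪ ν ∧ Integrable (llr μ ν) μ then ENNReal.ofReal (∫ ω, llr μ ν ω ∂μ) else ⊤

lemma relEnt_eq {Ω : Type*} [MeasurableSpace Ω] {μ ν : Measure Ω}
    (h1 : μ ≪ ν) (h2 : Integrable (llr μ ν) μ) :
    relEnt μ ν = ENNReal.ofReal (∫ x, llr μ ν x ∂μ) := by
  rw [relEnt, if_pos ⟨h1, h2⟩]

lemma aux_sub_one_le (x : ℝ) (hx : 0 ≤ x) : x - 1 ≤ x * Real.log x := by
  rcases hx.eq_or_lt with h | h
  · simp [← h]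
  · have h1 := Real.log_le_sub_one_of_pos (inv_pos.mpr h)
    rw [Real.log_inv] at h1
    have h2 : x * (-Real.log x) ≤ x * (x⁻¹ - 1) := by
      exact mul_le_mul_of_nonneg_left h1 h.le
    rw [mul_sub, mul_inv_cancel₀ h.ne'] at h2
    nlinarith

lemma aux_eq_one (x : ℝ) (hx : 0 ≤ x) (h : x * Real.log x = x - 1) : x = 1 := by
  rcases hx.eq_or_lt with h0 | h0
  · simp [← h0] at h
  · by_contra hne
    have h1 := Real.log_lt_sub_one_of_pos (inv_pos.mpr h0) (by
      simp only [ne_eq, inv_eq_one]; exact hne)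
    rw [Real.log_inv] at h1
    have h2 : x * (-Real.log x) < x * (x⁻¹ - 1) := by
      exact (mul_lt_mul_iff_right₀ h0).mpr h1
    rw [mul_sub, mul_inv_cancel₀ h0.ne'] at h2
    nlinarith

lemma aux_mul_abs_log (x : ℝ) (hx : 0 ≤ x) : x * |Real.log x| ≤ 1 + x ^ 2 := by
  rcases hx.eq_or_lt with h | h
  · simp [← h]
  rcases le_or_gt x 1 with h1 | h1
  · have hlog : Real.log x ≤ 0 := Real.log_nonpos hx h1
    rw [abs_of_nonpos hlog]
    have h2 := Real.log_le_sub_one_of_pos (inv_pos.mpr h)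
    rw [Real.log_inv] at h2
    have h3 : x * (-Real.log x) ≤ x * (x⁻¹ - 1) := mul_le_mul_of_nonneg_left h2 h.le
    rw [mul_sub, mul_inv_cancel₀ h.ne'] at h3
    nlinarith
  · rw [abs_of_nonneg (Real.log_nonneg h1.le)]
    have h2 := Real.log_le_sub_one_of_pos h
    nlinarith

lemma aux_min_log_bound (x : ℝ) (hx : 0 ≤ x) : |x * min (Real.log x) 0| ≤ 1 := by
  rcases le_or_gt 1 x with h1 | h1
  · rw [min_eq_right (Real.log_nonneg h1)]; simp
  rcases hx.eq_or_lt with h | h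
  · simp [← h]
  · rw [min_eq_left (Real.log_nonpos hx h1.le), abs_of_nonpos
      (mul_nonpos_of_nonneg_of_nonpos hx (Real.log_nonpos hx h1.le))]
    have h2 := Real.log_le_sub_one_of_pos (inv_pos.mpr h)
    rw [Real.log_inv] at h2
    have h3 : x * (-Real.log x) ≤ x * (x⁻¹ - 1) := mul_le_mul_of_nonneg_left h2 h.le
    rw [mul_sub, mul_inv_cancel₀ h.ne'] at h3
    nlinarith

lemma gibbs {α : Type*} {mα : MeasurableSpace α} {μ ν : Measure α}
    [IsProbabilityMeasure μ] [IsProbabilityMeasure ν]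
    (hμν : μ ≪ ν) (hint : Integrable (llr μ ν) μ) :
    0 ≤ ∫ x, llr μ ν x ∂μ ∧ (∫ x, llr μ ν x ∂μ = 0 → μ = ν) := by
  set r : α → ℝ := fun x => (μ.rnDeriv ν x).toReal with hr
  have hrmeas : Measurable r := (Measure.measurable_rnDeriv μ ν).ennreal_toReal
  have hrnonneg : ∀ x, 0 ≤ r x := fun x => ENNReal.toReal_nonneg
  have h1 : Integrable (fun x => r x * Real.log (r x)) ν := by
    have := (integrable_rnDeriv_smul_iff hμν).mpr hint
    simpa [llr, smul_eq_mul] using this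
  have h2 : ∫ x, r x * Real.log (r x) ∂ν = ∫ x, llr μ ν x ∂μ := by
    have := integral_rnDeriv_smul hμν (f := llr μ ν)
    simpa [llr, smul_eq_mul] using this
  have h3 : Integrable r ν := Measure.integrable_toReal_rnDeriv
  have h4 : ∫ x, r x ∂ν = 1 := by
    rw [hr, Measure.integral_toReal_rnDeriv hμν]; simp
  have hφint : Integrable (fun x => r x * Real.log (r x) - r x + 1) ν :=
    (h1.sub h3).add (integrable_const 1)
  have hφnonneg : ∀ x, 0 ≤ r x * Real.log (r x) - r x + 1 := fun x => by
    have := aux_sub_one_le (r x) (hrnonneg x); linarith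
  have hφint_eq : ∫ x, (r x * Real.log (r x) - r x + 1) ∂ν = ∫ x, llr μ ν x ∂μ := by
    have : ∫ x, (r x * Real.log (r x) - r x + 1) ∂ν
        = (∫ x, (r x * Real.log (r x) - r x) ∂ν) + ∫ _x, (1:ℝ) ∂ν :=
      integral_add (h1.sub h3) (integrable_const 1)
    rw [this, integral_sub h1 h3, h2, h4]
    simp
  constructor
  · rw [← hφint_eq]
    exact integral_nonneg hφnonneg
  · intro h0
    have hzero : ∫ x, (r x * Real.log (r x) - r x + 1) ∂ν = 0 := by rw [hφint_eq, h0]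
    have hae : (fun x => r x * Real.log (r x) - r x + 1) =ᵐ[ν] 0 := by
      exact (integral_eq_zero_iff_of_nonneg hφnonneg hφint).mp hzero
    have hone : ∀ᵐ x ∂ν, μ.rnDeriv ν x = 1 := by
      filter_upwards [hae, Measure.rnDeriv_lt_top μ ν] with x hx hxlt
      have : r x * Real.log (r x) = r x - 1 := by
        have := hx; simp only [Pi.zero_apply] at this; linarith
      have hx1 : r x = 1 := aux_eq_one _ (hrnonneg x) this
      have := ENNReal.ofReal_toReal hxlt.ne
      rw [← this, hr] at *
      simp only [hx1]; simp
    calc μ = ν.withDensity (μ.rnDeriv ν) := (Measure.withDensity_rnDeriv_eq μ ν hμν).symm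
    _ = ν.withDensity 1 := withDensity_congr_ae hone
    _ = ν := by simp

lemma llr_min_integrable {α : Type*} {mα : MeasurableSpace α} {μ ν : Measure α}
    [IsFiniteMeasure μ] [IsFiniteMeasure ν] (hμν : μ ≪ ν) :
    Integrable (fun x => min (llr μ ν x) 0) μ := by
  rw [← integrable_rnDeriv_smul_iff hμν]
  have hmeas : Measurable (fun x => (μ.rnDeriv ν x).toReal • min (llr μ ν x) 0) := by
    exact ((Measure.measurable_rnDeriv μ ν).ennreal_toReal.smul
      ((measurable_llr μ ν).min measurable_const))
  refine Integrable.mono' (integrable_const (1:ℝ)) hmeas.aestronglyMeasurable ?_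
  filter_upwards with x
  have h := aux_min_log_bound ((μ.rnDeriv ν x).toReal) ENNReal.toReal_nonneg
  rw [abs_mul, abs_of_nonneg ENNReal.toReal_nonneg] at h
  simpa [llr] using h

lemma ac_withDensity {α : Type*} {mα : MeasurableSpace α} {μ ν : Measure α} [SFinite ν]
    {κ : α → ℝ≥0∞} (hκ : Measurable κ)
    (hμν : μ ≪ ν) (h0 : μ {x | κ x = 0} = 0) : μ ≪ ν.withDensity κ := by
  refine Measure.AbsolutelyContinuous.mk (fun s hs hνs ↦ ?_)
  rw [withDensity_apply _ hs, lintegral_eq_zero_iff hκ] at hνs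
  have ht : MeasurableSet {x | κ x ≠ 0} := (hκ (measurableSet_singleton 0)).compl
  have h1 : ν ({x | κ x ≠ 0} ∩ s) = 0 := by
    have h' : (ν.restrict s) {x | κ x ≠ 0} = 0 := by simpa [Filter.EventuallyEq, ae_iff] using hνs
    rwa [Measure.restrict_apply ht] at h'
  have h2 : μ ({x | κ x ≠ 0} ∩ s) = 0 := hμν h1
  have hsub : s ⊆ ({x | κ x ≠ 0} ∩ s) ∪ {x | κ x = 0} := fun x hx => by
    by_cases h : κ x = 0
    · exact Or.inr h
    · exact Or.inl ⟨h, hx⟩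
  exact measure_mono_null hsub (by
    exact le_antisymm ((measure_union_le _ _).trans (by rw [h2, h0]; simp)) zero_le)

lemma map_withDensity_comp {α β : Type*} {mα : MeasurableSpace α} {mβ : MeasurableSpace β}
    {μ : Measure α} {T : α → β} (hT : Measurable T) {f : β → ℝ≥0∞} (hf : Measurable f) :
    (μ.withDensity (fun a => f (T a))).map T = (μ.map T).withDensity f := by
  ext s hs
  rw [Measure.map_apply hT hs, withDensity_apply _ (hT hs), withDensity_apply _ hs,
    Measure.restrict_map hT hs, lintegral_map hf hT]

lemma key_dpi {α β : Type*} {mα : MeasurableSpace α} {mβ : MeasurableSpace β}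
    {P ν : Measure α} [IsProbabilityMeasure P] [IsProbabilityMeasure ν]
    {T : α → β} (hT : Measurable T)
    {μπ ϱ : Measure β} (hμπ : μπ = P.map T) (hϱ : ϱ = ν.map T)
    (hPν : P ≪ ν) (hint : Integrable (llr P ν) P) :
    Integrable (llr μπ ϱ) μπ ∧
    ∫ x, llr μπ ϱ x ∂μπ ≤ ∫ a, llr P ν a ∂P ∧
    (∫ x, llr μπ ϱ x ∂μπ = ∫ a, llr P ν a ∂P →
      P = ν.withDensity (fun a => μπ.rnDeriv ϱ (T a))) := by
  subst hμπ hϱ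
  set μπ := P.map T with hμπ
  set ϱ := ν.map T with hϱ
  haveI : IsProbabilityMeasure μπ := Measure.isProbabilityMeasure_map hT.aemeasurable
  haveI : IsProbabilityMeasure ϱ := Measure.isProbabilityMeasure_map hT.aemeasurable
  have hμπϱ : μπ ≪ ϱ := hPν.map hT
  set k : β → ℝ≥0∞ := μπ.rnDeriv ϱ with hk
  have hkmeas : Measurable k := Measure.measurable_rnDeriv μπ ϱ
  set κ : α → ℝ≥0∞ := fun a => k (T a) with hκdef
  have hκmeas : Measurable κ := hkmeas.comp hT
  set Q : Measure α := ν.withDensity κ with hQ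
  -- Q is a probability measure
  haveI hQprob : IsProbabilityMeasure Q := by
    constructor
    rw [hQ, withDensity_apply _ MeasurableSet.univ, Measure.restrict_univ, hκdef,
      ← lintegral_map hkmeas hT, ← hϱ, Measure.lintegral_rnDeriv hμπϱ]
    simp
  -- P gives no mass to {κ = 0}
  have hS : MeasurableSet {x | k x = 0} := hkmeas (measurableSet_singleton 0)
  have hP0 : P {a | κ a = 0} = 0 := by
    have h1 : {a | κ a = 0} = T ⁻¹' {x | k x = 0} := rfl
    rw [h1, ← Measure.map_apply hT hS, ← hμπ]
    have h2 : μπ {x | k x = 0} = ∫⁻ x in {x | k x = 0}, k x ∂ϱ :=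
      (Measure.setLIntegral_rnDeriv' hμπϱ hS).symm
    rw [h2, setLIntegral_congr_fun hS (fun x hx => hx)]
    simp
  have hPQ : P ≪ Q := ac_withDensity hκmeas hPν hP0
  -- a.e. positivity and finiteness facts
  have hκpos : ∀ᵐ a ∂P, 0 < κ a := by
    rw [ae_iff]
    refine measure_mono_null (fun a ha => ?_) hP0
    simpa using ha
  have hκfin : ∀ᵐ a ∂P, κ a < ∞ := by
    have h1 : ∀ᵐ x ∂ϱ, k x < ∞ := Measure.rnDeriv_lt_top μπ ϱ
    have h2 : ∀ᵐ a ∂ν, k (T a) < ∞ := by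
      rw [hϱ] at h1
      exact (ae_map_iff hT.aemeasurable
        (measurableSet_lt hkmeas measurable_const)).mp h1
    exact hPν.ae_le h2
  have hspos : ∀ᵐ a ∂P, 0 < P.rnDeriv Q a := Measure.rnDeriv_pos hPQ
  have hsfin : ∀ᵐ a ∂P, P.rnDeriv Q a < ∞ := hPQ.ae_le (Measure.rnDeriv_lt_top P Q)
  -- chain rule
  have hQν : Q.rnDeriv ν =ᵐ[ν] κ := Measure.rnDeriv_withDensity ν hκmeas
  have hchain : P.rnDeriv Q * Q.rnDeriv ν =ᵐ[ν] P.rnDeriv ν :=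
    Measure.rnDeriv_mul_rnDeriv hPQ
  have hdecomp : ∀ᵐ a ∂P, llr P ν a = llr P Q a + Real.log (κ a).toReal := by
    filter_upwards [hPν.ae_le hchain, hPν.ae_le hQν, hκpos, hκfin, hspos, hsfin]
      with a h1 h2 h3 h4 h5 h6
    have hrn : P.rnDeriv ν a = P.rnDeriv Q a * κ a := by
      rw [← h1, Pi.mul_apply, h2]
    rw [llr, llr, hrn, ENNReal.toReal_mul, Real.log_mul]
    · exact (ENNReal.toReal_pos h5.ne' h6.ne).ne'
    · exact (ENNReal.toReal_pos h3.ne' h4.ne).ne'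
  -- llr μπ ϱ ∘ T
  set C : α → ℝ := fun a => llr μπ ϱ (T a) with hC
  have hCκ : ∀ a, C a = Real.log (κ a).toReal := fun a => rfl
  set B : α → ℝ := llr P Q with hB
  have hBmeas : Measurable B := measurable_llr P Q
  have hCmeas : Measurable C := (measurable_llr μπ ϱ).comp hT
  have hdecomp' : ∀ᵐ a ∂P, llr P ν a = B a + C a := hdecomp
  -- integrability of min parts
  have hBmin : Integrable (fun a => min (B a) 0) P := llr_min_integrable hPQ
  have hCmin : Integrable (fun a => min (C a) 0) P := by
    have h1 : Integrable (fun x => min (llr μπ ϱ x) 0) μπ := llr_min_integrable hμπϱ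
    rw [hμπ] at h1
    exact (integrable_map_measure ((measurable_llr _ _).min
      measurable_const).aestronglyMeasurable hT.aemeasurable).mp h1
  -- integrability of B and C
  have hD : Integrable (fun a => llr P ν a - min (B a) 0 - min (C a) 0) P :=
    (hint.sub hBmin).sub hCmin
  have hmaxB : Integrable (fun a => max (B a) 0) P := by
    refine Integrable.mono' hD (hBmeas.max measurable_const).aestronglyMeasurable ?_
    filter_upwards [hdecomp'] with a ha
    rw [Real.norm_eq_abs, abs_of_nonneg (le_max_right _ _)]
    have h1 : B a = max (B a) 0 + min (B a) 0 := by rw [max_add_min, add_zero]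
    have h2 : C a = max (C a) 0 + min (C a) 0 := by rw [max_add_min, add_zero]
    have h3 : (0:ℝ) ≤ max (C a) 0 := le_max_right _ _
    linarith [ha]
  have hmaxC : Integrable (fun a => max (C a) 0) P := by
    refine Integrable.mono' hD (hCmeas.max measurable_const).aestronglyMeasurable ?_
    filter_upwards [hdecomp'] with a ha
    rw [Real.norm_eq_abs, abs_of_nonneg (le_max_right _ _)]
    have h1 : B a = max (B a) 0 + min (B a) 0 := by rw [max_add_min, add_zero]
    have h2 : C a = max (C a) 0 + min (C a) 0 := by rw [max_add_min, add_zero]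
    have h3 : (0:ℝ) ≤ max (B a) 0 := le_max_right _ _
    linarith [ha]
  have hBint : Integrable B P := by
    have : B = fun a => max (B a) 0 + min (B a) 0 := by
      funext a; rw [max_add_min, add_zero]
    rw [this]; exact hmaxB.add hBmin
  have hCint : Integrable C P := by
    have : C = fun a => max (C a) 0 + min (C a) 0 := by
      funext a; rw [max_add_min, add_zero]
    rw [this]; exact hmaxC.add hCmin
  have hμπint : Integrable (llr μπ ϱ) μπ := by
    rw [hμπ]
    exact (integrable_map_measure (stronglyMeasurable_llr _ _).aestronglyMeasurable
      hT.aemeasurable).mpr hCint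
  -- integral identities
  have hIC : ∫ x, llr μπ ϱ x ∂μπ = ∫ a, C a ∂P := by
    rw [hμπ]
    exact integral_map hT.aemeasurable (stronglyMeasurable_llr _ _).aestronglyMeasurable
  have hIsum : ∫ a, llr P ν a ∂P = ∫ a, B a ∂P + ∫ a, C a ∂P := by
    rw [← integral_add hBint hCint]
    exact integral_congr_ae hdecomp'
  have hgibbs := gibbs hPQ hBint
  refine ⟨hμπint, ?_, ?_⟩
  · rw [hIC, hIsum]; linarith [hgibbs.1]
  · intro heq
    rw [hIC] at heq
    have hB0 : ∫ a, B a ∂P = 0 := by rw [hIsum] at heq; linarith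
    exact hgibbs.2 hB0


/-- if the static Schrödinger bridge problem
`min_{π ∈ Π(μ₀,μ₁)} H(π|ρ)`, `ρ = ℙ₀∘(X₀,X₁)⁻¹`, has a unique solution `π*`
lying in `Cpl₂(μ₀,μ₁)`, then `P̂` defined by `dP̂/dℙ₀ = (dπ*/dρ)(X₀,X₁)` is the
unique minimizer of `H(·|ℙ₀)` over `P₂(μ₀,μ₁)`. -/
theorem stmt_10 {d : ℕ} {Ω : Type*} {m0 : MeasurableSpace Ω}
    (ℙ₀ : Measure Ω) [IsProbabilityMeasure ℙ₀]
    (μ₀ μ₁ : Measure (EuclideanSpace ℝ (Fin d)))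
    [IsProbabilityMeasure μ₀] [IsProbabilityMeasure μ₁]
    (X0 X1 : Ω → EuclideanSpace ℝ (Fin d))
    (hX0 : Measurable X0) (hX1 : Measurable X1)
    (hμ₀ : ℙ₀.map X0 = μ₀)
    (ρ : Measure (EuclideanSpace ℝ (Fin d) × EuclideanSpace ℝ (Fin d)))
    (hρ : ρ = ℙ₀.map (fun ω => (X0 ω, X1 ω)))
    -- the set of couplings Π(μ₀,μ₁) and its subset Cpl₂(μ₀,μ₁)
    (Cpl Cpl₂ : Set (Measure (EuclideanSpace ℝ (Fin d) × EuclideanSpace ℝ (Fin d))))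
    (hCpl : Cpl = {π | IsProbabilityMeasure π ∧ π.map Prod.fst = μ₀
      ∧ π.map Prod.snd = μ₁})
    (hCpl₂ : Cpl₂ = {π ∈ Cpl | (π ≪ ρ ∧ ρ ≪ π)
      ∧ Integrable (fun ω => |Real.log ((π.rnDeriv ρ (X0 ω, X1 ω)).toReal)|
          + ((π.rnDeriv ρ (X0 ω, X1 ω)).toReal) ^ 2) ℙ₀})
    -- π* is the unique solution of the Schrödinger bridge problem and lies in Cpl₂
    (πstar : Measure (EuclideanSpace ℝ (Fin d) × EuclideanSpace ℝ (Fin d)))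
    (hπstar : πstar ∈ Cpl ∧ (∀ π ∈ Cpl, relEnt πstar ρ ≤ relEnt π ρ)
      ∧ (∀ π ∈ Cpl, relEnt π ρ = relEnt πstar ρ → π = πstar))
    (hπstar₂ : πstar ∈ Cpl₂)
    (Phat : Measure Ω)
    (hPhat : Phat = ℙ₀.withDensity
      (fun ω => ENNReal.ofReal ((πstar.rnDeriv ρ (X0 ω, X1 ω)).toReal)))
    -- the set P₂(μ₀,μ₁)
    (P₂ : Set (Measure Ω))
    (hP₂ : P₂ = {P : Measure Ω | IsProbabilityMeasure P ∧ (P ≪ ℙ₀ ∧ ℙ₀ ≪ P)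
      ∧ P.map X0 = μ₀ ∧ P.map X1 = μ₁
      ∧ Integrable (fun ω => Real.log ((P.rnDeriv ℙ₀ ω).toReal)) ℙ₀
      ∧ Integrable (fun ω => ((P.rnDeriv ℙ₀ ω).toReal) ^ 2) ℙ₀}) :
    Phat ∈ P₂ ∧
    (∀ P ∈ P₂, relEnt Phat ℙ₀ ≤ relEnt P ℙ₀) ∧
    (∀ P ∈ P₂, relEnt P ℙ₀ = relEnt Phat ℙ₀ → P = Phat) := by
  have hT : Measurable (fun ω : Ω => (X0 ω, X1 ω)) := hX0.prodMk hX1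
  haveI hρprob : IsProbabilityMeasure ρ := by
    rw [hρ]; exact Measure.isProbabilityMeasure_map hT.aemeasurable

  obtain ⟨hπCpl, hmin, huniq⟩ := hπstar
  have hπCpl' := hπCpl
  rw [hCpl] at hπCpl'
  obtain ⟨hπprob, hπfst, hπsnd⟩ := hπCpl'
  haveI := hπprob
  haveI : SigmaFinite ρ := inferInstance
  haveI : SFinite πstar := inferInstance
  haveI test1 : πstar.HaveLebesgueDecomposition ρ := inferInstance
  rw [hCpl₂] at hπstar₂
  obtain ⟨-, ⟨hac, hacρ⟩, hint2⟩ := hπstar₂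
  -- notation
  set F : Ω → ℝ := fun ω => (πstar.rnDeriv ρ (X0 ω, X1 ω)).toReal with hFdef
  have hint2' : Integrable (fun ω => |Real.log (F ω)| + F ω ^ 2) ℙ₀ := hint2
  have hFmeas : Measurable F :=
    ((Measure.measurable_rnDeriv πstar ρ).comp hT).ennreal_toReal
  have hFnonneg : ∀ ω, 0 ≤ F ω := fun ω => ENNReal.toReal_nonneg
  have habs : Integrable (fun ω => |Real.log (F ω)|) ℙ₀ := by
    refine hint2'.mono' (hFmeas.log.abs).aestronglyMeasurable ?_
    filter_upwards with ω
    rw [Real.norm_eq_abs, abs_abs]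
    exact le_add_of_nonneg_right (sq_nonneg _)
  have hsqF : Integrable (fun ω => F ω ^ 2) ℙ₀ := by
    refine hint2'.mono' (hFmeas.pow_const 2).aestronglyMeasurable ?_
    filter_upwards with ω
    rw [Real.norm_eq_abs, abs_of_nonneg (sq_nonneg _)]
    exact le_add_of_nonneg_left (abs_nonneg _)
  have hlogF : Integrable (fun ω => Real.log (F ω)) ℙ₀ := by
    refine habs.mono' hFmeas.log.aestronglyMeasurable ?_
    filter_upwards with ω
    rw [Real.norm_eq_abs]
  -- a.e. finiteness and positivity
  have hfin : ∀ᵐ ω ∂ℙ₀, πstar.rnDeriv ρ (X0 ω, X1 ω) < ⊤ := by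
    have h := Measure.rnDeriv_lt_top πstar ρ
    rw [hρ] at h
    have := (ae_map_iff hT.aemeasurable
      (measurableSet_lt (Measure.measurable_rnDeriv πstar _) measurable_const)).mp h
    rw [← hρ] at this
    exact this
  have hpos : ∀ᵐ ω ∂ℙ₀, 0 < πstar.rnDeriv ρ (X0 ω, X1 ω) := by
    have h := Measure.rnDeriv_pos' (μ := ρ) (ν := πstar) hacρ
    rw [hρ] at h
    have := (ae_map_iff hT.aemeasurable
      (measurableSet_lt measurable_const (Measure.measurable_rnDeriv πstar _))).mp h
    rw [← hρ] at this
    exact this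
  have hgf : (fun ω => ENNReal.ofReal (F ω)) =ᵐ[ℙ₀]
      (fun ω => πstar.rnDeriv ρ (X0 ω, X1 ω)) := by
    filter_upwards [hfin] with ω hω
    exact ENNReal.ofReal_toReal hω.ne
  have hPhat2 : Phat = ℙ₀.withDensity (fun ω => πstar.rnDeriv ρ (X0 ω, X1 ω)) := by
    rw [hPhat]; exact withDensity_congr_ae hgf
  -- pushforward of Phat
  have hmapPhat : Phat.map (fun ω => (X0 ω, X1 ω)) = πstar := by
    calc Phat.map (fun ω => (X0 ω, X1 ω))
        = ((ℙ₀.map (fun ω => (X0 ω, X1 ω))).withDensity (πstar.rnDeriv ρ)) := by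
          rw [hPhat2]
          exact map_withDensity_comp hT (Measure.measurable_rnDeriv πstar ρ)
      _ = ρ.withDensity (πstar.rnDeriv ρ) := by rw [← hρ]
      _ = πstar := Measure.withDensity_rnDeriv_eq πstar ρ hac
  haveI hPhatprob : IsProbabilityMeasure Phat := by
    constructor
    have h1 : Phat Set.univ = (Phat.map (fun ω => (X0 ω, X1 ω))) Set.univ := by
      rw [Measure.map_apply hT MeasurableSet.univ, Set.preimage_univ]
    rw [h1, hmapPhat, measure_univ]
  have hPhat_ac : Phat ≪ ℙ₀ := by
    rw [hPhat]; exact withDensity_absolutelyContinuous ℙ₀ _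
  have h₀ac : ℙ₀ ≪ Phat := by
    rw [hPhat2]
    refine withDensity_absolutelyContinuous'
      ((Measure.measurable_rnDeriv πstar ρ).comp hT).aemeasurable ?_
    filter_upwards [hpos] with ω hω
    exact hω.ne'
  -- rnDeriv of Phat
  have hrn : Phat.rnDeriv ℙ₀ =ᵐ[ℙ₀] (fun ω => ENNReal.ofReal (F ω)) := by
    rw [hPhat]
    exact Measure.rnDeriv_withDensity ℙ₀ (hFmeas.ennreal_ofReal)
  have hrnF : ∀ᵐ ω ∂ℙ₀, (Phat.rnDeriv ℙ₀ ω).toReal = F ω := by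
    filter_upwards [hrn] with ω hω
    rw [hω, ENNReal.toReal_ofReal (hFnonneg ω)]
  -- membership of Phat in P₂
  have hmX0 : Phat.map X0 = μ₀ := by
    have h1 : Phat.map X0 = (Phat.map (fun ω => (X0 ω, X1 ω))).map Prod.fst := by
      rw [Measure.map_map measurable_fst hT]
      rfl
    rw [h1, hmapPhat, hπfst]
  have hmX1 : Phat.map X1 = μ₁ := by
    have h1 : Phat.map X1 = (Phat.map (fun ω => (X0 ω, X1 ω))).map Prod.snd := by
      rw [Measure.map_map measurable_snd hT]
      rfl
    rw [h1, hmapPhat, hπsnd]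
  have hmem : Phat ∈ P₂ := by
    rw [hP₂]
    refine ⟨hPhatprob, ⟨hPhat_ac, h₀ac⟩, hmX0, hmX1, ?_, ?_⟩
    · refine hlogF.congr ?_
      filter_upwards [hrnF] with ω hω
      rw [hω]
    · refine hsqF.congr ?_
      filter_upwards [hrnF] with ω hω
      rw [hω]
  -- entropy of Phat equals entropy of πstar
  have hFlogF : Integrable (fun ω => F ω * Real.log (F ω)) ℙ₀ := by
    refine ((integrable_const (1:ℝ)).add hsqF).mono'
      (hFmeas.mul hFmeas.log).aestronglyMeasurable ?_
    filter_upwards with ω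
    rw [Real.norm_eq_abs, abs_mul, abs_of_nonneg (hFnonneg ω)]
    exact aux_mul_abs_log (F ω) (hFnonneg ω)
  have hsmul : (fun ω => (Phat.rnDeriv ℙ₀ ω).toReal • llr Phat ℙ₀ ω) =ᵐ[ℙ₀]
      (fun ω => F ω * Real.log (F ω)) := by
    filter_upwards [hrnF] with ω hω
    simp only [llr, smul_eq_mul, hω]
  have h_llr_int : Integrable (llr Phat ℙ₀) Phat :=
    (integrable_rnDeriv_smul_iff hPhat_ac).mp (hFlogF.congr hsmul.symm)
  have hIPhat : ∫ ω, llr Phat ℙ₀ ω ∂Phat = ∫ ω, F ω * Real.log (F ω) ∂ℙ₀ := by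
    rw [← integral_rnDeriv_smul hPhat_ac]
    exact integral_congr_ae hsmul
  -- llr of πstar w.r.t. ρ
  have hGmeas : Measurable (fun x => (πstar.rnDeriv ρ x).toReal
      * Real.log ((πstar.rnDeriv ρ x).toReal)) :=
    (Measure.measurable_rnDeriv πstar ρ).ennreal_toReal.mul
      (Measure.measurable_rnDeriv πstar ρ).ennreal_toReal.log
  have hGint : Integrable (fun x => (πstar.rnDeriv ρ x).toReal
      * Real.log ((πstar.rnDeriv ρ x).toReal)) ρ := by
    have h2 := (integrable_map_measure (μ := ℙ₀) (f := fun ω => (X0 ω, X1 ω))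
      hGmeas.aestronglyMeasurable hT.aemeasurable)
    rw [← hρ] at h2
    exact h2.mpr hFlogF
  have h_llr_int_π : Integrable (llr πstar ρ) πstar := by
    refine (integrable_rnDeriv_smul_iff hac).mp (hGint.congr ?_)
    filter_upwards with x
    simp only [llr, smul_eq_mul]
  have hIπstar : ∫ x, llr πstar ρ x ∂πstar = ∫ ω, F ω * Real.log (F ω) ∂ℙ₀ := by
    have h2 := integral_map (μ := ℙ₀) (φ := fun ω => (X0 ω, X1 ω))
      hT.aemeasurable hGmeas.aestronglyMeasurable
    rw [← hρ] at h2
    calc ∫ x, llr πstar ρ x ∂πstar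
        = ∫ x, (πstar.rnDeriv ρ x).toReal • llr πstar ρ x ∂ρ :=
          (integral_rnDeriv_smul hac).symm
      _ = ∫ x, (πstar.rnDeriv ρ x).toReal * Real.log ((πstar.rnDeriv ρ x).toReal) ∂ρ := by
          simp only [llr, smul_eq_mul]
      _ = ∫ ω, F ω * Real.log (F ω) ∂ℙ₀ := h2
  have hRPhat : relEnt Phat ℙ₀ = ENNReal.ofReal (∫ ω, F ω * Real.log (F ω) ∂ℙ₀) := by
    rw [relEnt_eq hPhat_ac h_llr_int, hIPhat]
  have hRπ : relEnt πstar ρ = ENNReal.ofReal (∫ ω, F ω * Real.log (F ω) ∂ℙ₀) := by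
    rw [relEnt_eq hac h_llr_int_π, hIπstar]
  have hInn : 0 ≤ ∫ ω, F ω * Real.log (F ω) ∂ℙ₀ := by
    rw [← hIπstar]; exact (gibbs hac h_llr_int_π).1
  -- main comparison for arbitrary P ∈ P₂
  have hcore : ∀ P ∈ P₂, relEnt Phat ℙ₀ ≤ relEnt P ℙ₀ ∧
      (relEnt P ℙ₀ = relEnt Phat ℙ₀ → P = Phat) := by
    intro P hP
    rw [hP₂] at hP
    obtain ⟨hPprob, ⟨hPac, hacP⟩, hPX0, hPX1, hPlog, hPsq⟩ := hP
    haveI := hPprob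
    have hhmeas : Measurable (fun ω => (P.rnDeriv ℙ₀ ω).toReal) :=
      (Measure.measurable_rnDeriv P ℙ₀).ennreal_toReal
    have hhlog_int : Integrable
        (fun ω => (P.rnDeriv ℙ₀ ω).toReal * Real.log ((P.rnDeriv ℙ₀ ω).toReal)) ℙ₀ := by
      refine ((integrable_const (1:ℝ)).add hPsq).mono'
        (hhmeas.mul hhmeas.log).aestronglyMeasurable ?_
      filter_upwards with ω
      rw [Real.norm_eq_abs, abs_mul, abs_of_nonneg ENNReal.toReal_nonneg]
      exact aux_mul_abs_log _ ENNReal.toReal_nonneg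
    have h_llrP_int : Integrable (llr P ℙ₀) P := by
      refine (integrable_rnDeriv_smul_iff hPac).mp (hhlog_int.congr ?_)
      filter_upwards with ω
      simp only [llr, smul_eq_mul]
    obtain ⟨hIntπ, hle, heqc⟩ := key_dpi hT (rfl : P.map (fun ω => (X0 ω, X1 ω)) = _)
      hρ hPac h_llrP_int
    haveI : IsProbabilityMeasure (P.map (fun ω => (X0 ω, X1 ω))) :=
      Measure.isProbabilityMeasure_map hT.aemeasurable
    have hπac : P.map (fun ω => (X0 ω, X1 ω)) ≪ ρ := by
      rw [hρ]; exact hPac.map hT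
    have hπmem : P.map (fun ω => (X0 ω, X1 ω)) ∈ Cpl := by
      rw [hCpl]
      refine ⟨Measure.isProbabilityMeasure_map hT.aemeasurable, ?_, ?_⟩
      · rw [Measure.map_map measurable_fst hT]; exact hPX0
      · rw [Measure.map_map measurable_snd hT]; exact hPX1
    have hRP : relEnt P ℙ₀ = ENNReal.ofReal (∫ a, llr P ℙ₀ a ∂P) :=
      relEnt_eq hPac h_llrP_int
    have hRπ' : relEnt (P.map (fun ω => (X0 ω, X1 ω))) ρ
        = ENNReal.ofReal (∫ x, llr (P.map (fun ω => (X0 ω, X1 ω))) ρ x ∂(P.map (fun ω => (X0 ω, X1 ω)))) :=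
      relEnt_eq hπac hIntπ
    have hIPnonneg : 0 ≤ ∫ a, llr P ℙ₀ a ∂P := (gibbs hPac h_llrP_int).1
    have hIπnonneg : 0 ≤ ∫ x, llr (P.map (fun ω => (X0 ω, X1 ω))) ρ x
        ∂(P.map (fun ω => (X0 ω, X1 ω))) := (gibbs hπac hIntπ).1
    constructor
    · calc relEnt Phat ℙ₀ = relEnt πstar ρ := by rw [hRPhat, hRπ]
        _ ≤ relEnt (P.map (fun ω => (X0 ω, X1 ω))) ρ := hmin _ hπmem
        _ = ENNReal.ofReal (∫ x, llr (P.map (fun ω => (X0 ω, X1 ω))) ρ x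
            ∂(P.map (fun ω => (X0 ω, X1 ω)))) := hRπ'
        _ ≤ ENNReal.ofReal (∫ a, llr P ℙ₀ a ∂P) := ENNReal.ofReal_le_ofReal hle
        _ = relEnt P ℙ₀ := hRP.symm
    · intro hEq
      have hIP_eq : ∫ a, llr P ℙ₀ a ∂P = ∫ ω, F ω * Real.log (F ω) ∂ℙ₀ := by
        rw [hRP, hRPhat] at hEq
        exact (ENNReal.ofReal_eq_ofReal_iff hIPnonneg hInn).mp hEq
      have hle2 : ∫ ω, F ω * Real.log (F ω) ∂ℙ₀
          ≤ ∫ x, llr (P.map (fun ω => (X0 ω, X1 ω))) ρ x ∂(P.map (fun ω => (X0 ω, X1 ω))) := by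
        have := hmin _ hπmem
        rw [hRπ, hRπ'] at this
        exact (ENNReal.ofReal_le_ofReal_iff hIπnonneg).mp this
      have hIπ_eq : ∫ x, llr (P.map (fun ω => (X0 ω, X1 ω))) ρ x
          ∂(P.map (fun ω => (X0 ω, X1 ω))) = ∫ a, llr P ℙ₀ a ∂P := by
        rw [hIP_eq]
        exact le_antisymm (hIP_eq ▸ hle) hle2
      have hππ : P.map (fun ω => (X0 ω, X1 ω)) = πstar := by
        refine huniq _ hπmem ?_
        rw [hRπ', hRπ, hIπ_eq, hIP_eq]
      have hPeq := heqc hIπ_eq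
      rw [hππ] at hPeq
      exact hPeq.trans hPhat2.symm
  exact ⟨hmem, fun P hP => (hcore P hP).1, fun P hP => (hcore P hP).2⟩
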